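/- Let a₁, a₂, a₃, a₄ ∈ ℂ with Im(a_ℓ) < 0 for all ℓ, the a_ℓ pairwise distinct, and a_ℓ + a_k ≠ 0 for all ℓ ≠ k. Then (1/(π·i)) · ∫_{−∞}^{∞} x² / ∏_{ℓ=1}^{4} (a_ℓ² − x²) dx = −(a₁ + a₂ + a₃ + a₄) / ∏_{1 ≤ ℓ < k ≤ 4} (a_ℓ + a_k). -/

import Mathlib

open Complex MeasureTheory Finset Filter Topology

lemma rbi_ne1 (b : ℂ) (hb : 0 < b.re) (x : ℝ) : b + I * x ≠ 0 := by
  intro h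
  have : (b + I * (x:ℂ)).re = 0 := by rw [h]; simp
  simp [Complex.add_re, Complex.mul_re] at this
  linarith

lemma rbi_ne2 (b : ℂ) (hb : 0 < b.re) (x : ℝ) : b - I * x ≠ 0 := by
  intro h
  have : (b - I * (x:ℂ)).re = 0 := by rw [h]; simp
  simp [Complex.sub_re, Complex.mul_re] at this
  linarith

lemma rbi_denom_ne (b : ℂ) (hb : 0 < b.re) (x : ℝ) : ((x:ℂ)^2 + b^2) ≠ 0 := by
  have h : ((x:ℂ)^2 + b^2) = (b + I*x) * (b - I*x) := by linear_combination ((x:ℂ)^2) * Complex.I_sq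
  rw [h]
  exact mul_ne_zero (rbi_ne1 b hb x) (rbi_ne2 b hb x)

lemma rbi_integrable (b : ℂ) (hb : 0 < b.re) :
    Integrable (fun x : ℝ => ((x:ℂ)^2 + b^2)⁻¹) := by
  have hcont : Continuous (fun x : ℝ => ((x:ℂ)^2 + b^2)⁻¹) := by
    apply Continuous.inv₀ (by continuity) (fun x => rbi_denom_ne b hb x)
  have hbound : ∀ x : ℝ, 1 + 2 * ‖b‖ ≤ |x| →
      ‖((x:ℂ)^2 + b^2)⁻¹‖ ≤ 4 * ‖(1 + x^2)⁻¹‖ := by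
    intro x hx
    have hb0 : 0 ≤ ‖b‖ := norm_nonneg b
    have hx1 : (1:ℝ) ≤ |x| := by linarith
    have hxb : 2 * ‖b‖ ≤ |x| := by linarith
    have hsq : x^2 = |x|^2 := (_root_.sq_abs x).symm
    have hnx : ‖(x:ℂ)^2‖ = x^2 := by
      rw [norm_pow, Complex.norm_real, Real.norm_eq_abs, _root_.sq_abs]
    have hnb : ‖b^2‖ ≤ x^2/4 := by
      rw [norm_pow]
      have : ‖b‖ ≤ |x|/2 := by linarith
      calc ‖b‖^2 ≤ (|x|/2)^2 := by exact pow_le_pow_left₀ hb0 this 2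
        _ = x^2/4 := by rw [← _root_.sq_abs x]; ring
    have hlow : (1 + x^2)/4 ≤ ‖(x:ℂ)^2 + b^2‖ := by
      have h2 := norm_sub_norm_le ((x:ℂ)^2) (-(b^2))
      simp only [norm_neg, sub_neg_eq_add] at h2
      have hx2 : 1 ≤ x^2 := by nlinarith
      nlinarith [h2, hnx, hnb]
    have hpos : (0:ℝ) < 1 + x^2 := by positivity
    rw [norm_inv, norm_inv, Real.norm_eq_abs, abs_of_pos hpos]
    calc ‖(x:ℂ)^2 + b^2‖⁻¹ ≤ ((1+x^2)/4)⁻¹ := inv_anti₀ (by positivity) hlow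
      _ = 4 * (1+x^2)⁻¹ := by field_simp
  have hTop : (fun x : ℝ => ((x:ℂ)^2 + b^2)⁻¹) =O[atTop] (fun x : ℝ => (1 + x^2)⁻¹) := by
    apply Asymptotics.IsBigO.of_bound 4
    filter_upwards [eventually_ge_atTop (1 + 2 * ‖b‖)] with x hx
    exact hbound x (le_trans hx (le_abs_self x))
  have hBot : (fun x : ℝ => ((x:ℂ)^2 + b^2)⁻¹) =O[atBot] (fun x : ℝ => (1 + x^2)⁻¹) := by
    apply Asymptotics.IsBigO.of_bound 4
    filter_upwards [eventually_le_atBot (-(1 + 2 * ‖b‖))] with x hx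
    exact hbound x (le_trans (by linarith) (neg_le_abs x))
  exact (hcont.locallyIntegrable).integrable_of_isBigO_atBot_atTop hBot
    (integrable_inv_one_add_sq.integrableAtFilter _) hTop
    (integrable_inv_one_add_sq.integrableAtFilter _)

lemma rbi_integral (b : ℂ) (hb : 0 < b.re) :
    ∫ x : ℝ, ((x:ℂ)^2 + b^2)⁻¹ = Real.pi / b := by
  have hbne : b ≠ 0 := fun h => by simp [h] at hb
  have hmem1 : ∀ x : ℝ, (b + I*x) ∈ Complex.slitPlane := by
    intro x
    apply Complex.mem_slitPlane_iff.2
    left; simp [Complex.add_re, Complex.mul_re]; exact hb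
  have hmem2 : ∀ x : ℝ, (b - I*x) ∈ Complex.slitPlane := by
    intro x
    apply Complex.mem_slitPlane_iff.2
    left; simp [Complex.sub_re, Complex.mul_re]; exact hb
  set F : ℝ → ℂ := fun x => (2*I*b)⁻¹ * (Complex.log (b + I*x) - Complex.log (b - I*x)) with hF
  have hderiv : ∀ x : ℝ, HasDerivAt F (((x:ℂ)^2 + b^2)⁻¹) x := by
    intro x
    have hf1 : HasDerivAt (fun z : ℂ => b + I*z) I (x:ℂ) := by
      simpa using ((hasDerivAt_id (x:ℂ)).const_mul I).const_add b
    have hf2 : HasDerivAt (fun z : ℂ => b - I*z) (-I) (x:ℂ) := by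
      simpa using ((hasDerivAt_id (x:ℂ)).const_mul I).const_sub b
    have d1 : HasDerivAt (fun y : ℝ => Complex.log (b + I*y)) ((b+I*x)⁻¹ * I) x :=
      by have h := ((Complex.hasDerivAt_log (hmem1 x)).comp (x:ℂ) hf1); exact h.comp_ofReal
    have d2 : HasDerivAt (fun y : ℝ => Complex.log (b - I*y)) ((b-I*x)⁻¹ * (-I)) x :=
      by have h := ((Complex.hasDerivAt_log (hmem2 x)).comp (x:ℂ) hf2); exact h.comp_ofReal
    have d3 := ((d1.sub d2).const_mul ((2*I*b)⁻¹))
    refine d3.congr_deriv ?_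
    have h1 := rbi_ne1 b hb x
    have h2 := rbi_ne2 b hb x
    have h3 : (2*I*b) ≠ 0 := by
      simp [Complex.I_ne_zero, hbne]
    have h4 : ((x:ℂ)^2 + b^2) = (b + I*x) * (b - I*x) := by
      linear_combination ((x:ℂ)^2) * Complex.I_sq
    rw [h4]
    field_simp
    ring_nf
  have hlimTop : Tendsto (fun x : ℝ => Complex.log (b + I*x) - Complex.log (b - I*x))
      atTop (𝓝 ((Real.pi : ℂ) * I)) := by
    have hc : Tendsto (fun x : ℝ => b * ((x:ℝ)⁻¹ : ℂ)) atTop (𝓝 0) := by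
      have h0 : Tendsto (fun x : ℝ => ((x⁻¹ : ℝ) : ℂ)) atTop (𝓝 ((0:ℝ):ℂ)) :=
        (Complex.continuous_ofReal.tendsto _).comp tendsto_inv_atTop_zero
      simpa using h0.const_mul b
    have hcont1 : ContinuousAt (fun z : ℂ => Complex.log (z + I) - Complex.log (z - I)) 0 := by
      apply ContinuousAt.sub
      · exact (continuousAt_clog (by simp [Complex.mem_slitPlane_iff])).comp
          ((continuous_id.add continuous_const).continuousAt)
      · exact (continuousAt_clog (by simp [Complex.mem_slitPlane_iff])).comp
          ((continuous_id.sub continuous_const).continuousAt)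
    have hG := (hcont1.tendsto).comp hc
    simp only [Function.comp_def, zero_add, zero_sub, Complex.log_I, Complex.log_neg_I] at hG
    have hval : (Real.pi : ℂ)/2 * I - -((Real.pi : ℂ)/2) * I = (Real.pi : ℂ) * I := by ring
    rw [hval] at hG
    refine Tendsto.congr' ?_ hG
    filter_upwards [eventually_gt_atTop (0:ℝ)] with x hx
    have hx0 : ((x:ℝ) : ℂ) ≠ 0 := by exact_mod_cast hx.ne'
    have ne1 : b * ((x:ℂ))⁻¹ + I ≠ 0 := by
      intro h
      have e : b + I*(x:ℂ) = (b * ((x:ℂ))⁻¹ + I) * (x:ℂ) := by field_simp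
      rw [h, zero_mul] at e
      exact rbi_ne1 b hb x e
    have ne2 : b * ((x:ℂ))⁻¹ - I ≠ 0 := by
      intro h
      have e : b - I*(x:ℂ) = (b * ((x:ℂ))⁻¹ - I) * (x:ℂ) := by field_simp; try ring
      rw [h, zero_mul] at e
      exact rbi_ne2 b hb x e
    have e1 : b + I*(x:ℂ) = ((x:ℝ) : ℂ) * (b * ((x:ℂ))⁻¹ + I) := by field_simp; try ring
    have e2 : b - I*(x:ℂ) = ((x:ℝ) : ℂ) * (b * ((x:ℂ))⁻¹ - I) := by field_simp; try ring
    rw [e1, e2, Complex.log_ofReal_mul hx ne1, Complex.log_ofReal_mul hx ne2]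
    ring
  have hlimBot : Tendsto (fun x : ℝ => Complex.log (b + I*x) - Complex.log (b - I*x))
      atBot (𝓝 (-((Real.pi : ℂ) * I))) := by
    have h1 := hlimTop.comp tendsto_neg_atBot_atTop
    have h2 : (fun x : ℝ => Complex.log (b + I*(-x:ℝ)) - Complex.log (b - I*(-x:ℝ)))
        = fun x : ℝ => -(Complex.log (b + I*x) - Complex.log (b - I*x)) := by
      funext x
      push_cast
      ring_nf
    have h3 : Tendsto (fun x : ℝ => -(Complex.log (b + I*x) - Complex.log (b - I*x)))
        atBot (𝓝 ((Real.pi : ℂ) * I)) := by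
      rw [← h2]; exact h1
    simpa using h3.neg
  have hTop : Tendsto F atTop (𝓝 ((2*I*b)⁻¹ * ((Real.pi : ℂ) * I))) := hlimTop.const_mul _
  have hBot : Tendsto F atBot (𝓝 ((2*I*b)⁻¹ * (-((Real.pi : ℂ) * I)))) := hlimBot.const_mul _
  rw [MeasureTheory.integral_of_hasDerivAt_of_tendsto hderiv (rbi_integrable b hb) hBot hTop]
  have h3 : (2*I*b) ≠ 0 := by simp [Complex.I_ne_zero, hbne]
  field_simp
  ring_nf

lemma rbi_a_ne (a : ℂ) (ha : a.im < 0) (x : ℝ) : a^2 - (x:ℂ)^2 ≠ 0 := by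
  have hb : 0 < (I*a).re := by
    simp [Complex.mul_re]
    linarith
  have h : a^2 - (x:ℂ)^2 = -(((x:ℂ)^2 + (I*a)^2)) := by
    linear_combination (a^2) * Complex.I_sq
  rw [h, neg_ne_zero]
  exact rbi_denom_ne (I*a) hb x

lemma rbi_integrable' (a : ℂ) (ha : a.im < 0) :
    Integrable (fun x : ℝ => (a^2 - (x:ℂ)^2)⁻¹) := by
  have hb : 0 < (I*a).re := by
    simp [Complex.mul_re]
    linarith
  have h : ∀ x : ℝ, (a^2 - (x:ℂ)^2)⁻¹ = -(((x:ℂ)^2 + (I*a)^2)⁻¹) := by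
    intro x
    rw [← inv_neg]
    congr 1
    linear_combination (a^2) * Complex.I_sq
  simp only [h]
  exact (rbi_integrable (I*a) hb).neg

lemma rbi_integral' (a : ℂ) (ha : a.im < 0) :
    ∫ x : ℝ, (a^2 - (x:ℂ)^2)⁻¹ = Real.pi * I / a := by
  have hane : a ≠ 0 := fun h => by simp [h] at ha
  have hb : 0 < (I*a).re := by
    simp [Complex.mul_re]
    linarith
  have h : ∀ x : ℝ, (a^2 - (x:ℂ)^2)⁻¹ = -(((x:ℂ)^2 + (I*a)^2)⁻¹) := by
    intro x
    rw [← inv_neg]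
    congr 1
    linear_combination (a^2) * Complex.I_sq
  simp only [h]
  rw [MeasureTheory.integral_neg, rbi_integral (I*a) hb]
  have hIa : I * a ≠ 0 := mul_ne_zero Complex.I_ne_zero hane
  field_simp
  linear_combination (-1:ℂ) * Complex.I_sq

lemma rbi_cancel (n E y P Q : ℂ) (hy : y ≠ 0) (hPQ : P = y * Q) :
    n/E * y⁻¹ * P = n*Q/E := by
  rw [hPQ]
  have h : n/E * y⁻¹ * (y*Q) = n/E * (y⁻¹*y) * Q := by ring
  rw [h, inv_mul_cancel₀ hy]
  ring

lemma rbi_pf (A B C D x : ℂ) (hA : A^2-x^2 ≠ 0) (hB : B^2-x^2 ≠ 0)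
    (hC : C^2-x^2 ≠ 0) (hD : D^2-x^2 ≠ 0) (hE : ((B^2-A^2)*(C^2-A^2)*(D^2-A^2)*(C^2-B^2)*(D^2-B^2)*(D^2-C^2)) ≠ 0) :
    x^2 / ((A^2-x^2)*(B^2-x^2)*(C^2-x^2)*(D^2-x^2)) =
      (A^2*(C^2-B^2)*(D^2-B^2)*(D^2-C^2))/((B^2-A^2)*(C^2-A^2)*(D^2-A^2)*(C^2-B^2)*(D^2-B^2)*(D^2-C^2)) * (A^2-x^2)⁻¹
    + (-B^2*(C^2-A^2)*(D^2-A^2)*(D^2-C^2))/((B^2-A^2)*(C^2-A^2)*(D^2-A^2)*(C^2-B^2)*(D^2-B^2)*(D^2-C^2)) * (B^2-x^2)⁻¹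
    + (C^2*(B^2-A^2)*(D^2-A^2)*(D^2-B^2))/((B^2-A^2)*(C^2-A^2)*(D^2-A^2)*(C^2-B^2)*(D^2-B^2)*(D^2-C^2)) * (C^2-x^2)⁻¹
    + (-D^2*(B^2-A^2)*(C^2-A^2)*(C^2-B^2))/((B^2-A^2)*(C^2-A^2)*(D^2-A^2)*(C^2-B^2)*(D^2-B^2)*(D^2-C^2)) * (D^2-x^2)⁻¹ := by
  have hP : ((A^2-x^2)*(B^2-x^2)*(C^2-x^2)*(D^2-x^2)) ≠ 0 := mul_ne_zero (mul_ne_zero (mul_ne_zero hA hB) hC) hD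
  rw [div_eq_iff hP, add_mul, add_mul, add_mul]
  rw [rbi_cancel (A^2*(C^2-B^2)*(D^2-B^2)*(D^2-C^2)) ((B^2-A^2)*(C^2-A^2)*(D^2-A^2)*(C^2-B^2)*(D^2-B^2)*(D^2-C^2)) (A^2-x^2) ((A^2-x^2)*(B^2-x^2)*(C^2-x^2)*(D^2-x^2)) ((B^2-x^2)*(C^2-x^2)*(D^2-x^2)) hA (by ring)]
  rw [rbi_cancel (-B^2*(C^2-A^2)*(D^2-A^2)*(D^2-C^2)) ((B^2-A^2)*(C^2-A^2)*(D^2-A^2)*(C^2-B^2)*(D^2-B^2)*(D^2-C^2)) (B^2-x^2) ((A^2-x^2)*(B^2-x^2)*(C^2-x^2)*(D^2-x^2)) ((A^2-x^2)*(C^2-x^2)*(D^2-x^2)) hB (by ring)]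
  rw [rbi_cancel (C^2*(B^2-A^2)*(D^2-A^2)*(D^2-B^2)) ((B^2-A^2)*(C^2-A^2)*(D^2-A^2)*(C^2-B^2)*(D^2-B^2)*(D^2-C^2)) (C^2-x^2) ((A^2-x^2)*(B^2-x^2)*(C^2-x^2)*(D^2-x^2)) ((A^2-x^2)*(B^2-x^2)*(D^2-x^2)) hC (by ring)]
  rw [rbi_cancel (-D^2*(B^2-A^2)*(C^2-A^2)*(C^2-B^2)) ((B^2-A^2)*(C^2-A^2)*(D^2-A^2)*(C^2-B^2)*(D^2-B^2)*(D^2-C^2)) (D^2-x^2) ((A^2-x^2)*(B^2-x^2)*(C^2-x^2)*(D^2-x^2)) ((A^2-x^2)*(B^2-x^2)*(C^2-x^2)) hD (by ring)]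
  rw [← add_div, ← add_div, ← add_div, eq_div_iff hE]
  ring

lemma rbi_step (p c0 c1 c2 c3 A B C D : ℂ) (hp : p ≠ 0) (hA : A ≠ 0) (hB : B ≠ 0)
    (hC : C ≠ 0) (hD : D ≠ 0) :
    1/p * (c0*(p/A) + c1*(p/B) + c2*(p/C) + c3*(p/D)) = c0/A + c1/B + c2/C + c3/D := by
  have h : c0*(p/A) + c1*(p/B) + c2*(p/C) + c3*(p/D) = p * (c0/A + c1/B + c2/C + c3/D) := by
    ring
  rw [h, one_div, inv_mul_cancel_left₀ hp]

lemma rbi_alg (A B C D : ℂ) (hA : A ≠ 0) (hB : B ≠ 0) (hC : C ≠ 0) (hD : D ≠ 0)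
    (vAB : B-A ≠ 0) (vAC : C-A ≠ 0) (vAD : D-A ≠ 0) (vBC : C-B ≠ 0) (vBD : D-B ≠ 0) (vCD : D-C ≠ 0)
    (sAB : A+B ≠ 0) (sAC : A+C ≠ 0) (sAD : A+D ≠ 0) (sBC : B+C ≠ 0) (sBD : B+D ≠ 0) (sCD : C+D ≠ 0) :
    (A^2*(C^2-B^2)*(D^2-B^2)*(D^2-C^2))/((B^2-A^2)*(C^2-A^2)*(D^2-A^2)*(C^2-B^2)*(D^2-B^2)*(D^2-C^2))/A + (-B^2*(C^2-A^2)*(D^2-A^2)*(D^2-C^2))/((B^2-A^2)*(C^2-A^2)*(D^2-A^2)*(C^2-B^2)*(D^2-B^2)*(D^2-C^2))/B + (C^2*(B^2-A^2)*(D^2-A^2)*(D^2-B^2))/((B^2-A^2)*(C^2-A^2)*(D^2-A^2)*(C^2-B^2)*(D^2-B^2)*(D^2-C^2))/C + (-D^2*(B^2-A^2)*(C^2-A^2)*(C^2-B^2))/((B^2-A^2)*(C^2-A^2)*(D^2-A^2)*(C^2-B^2)*(D^2-B^2)*(D^2-C^2))/D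
      = -(A+B+C+D) / ((A+B)*((A+C)*((A+D)*((B+C)*((B+D)*(C+D)))))) := by
  have hV : (B-A)*(C-A)*(D-A)*(C-B)*(D-B)*(D-C) ≠ 0 :=
    mul_ne_zero (mul_ne_zero (mul_ne_zero (mul_ne_zero (mul_ne_zero vAB vAC) vAD) vBC) vBD) vCD
  have hS : ((A+B)*((A+C)*((A+D)*((B+C)*((B+D)*(C+D)))))) ≠ 0 :=
    mul_ne_zero sAB (mul_ne_zero sAC (mul_ne_zero sAD (mul_ne_zero sBC (mul_ne_zero sBD sCD))))
  have hE : ((B^2-A^2)*(C^2-A^2)*(D^2-A^2)*(C^2-B^2)*(D^2-B^2)*(D^2-C^2)) ≠ 0 := by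
    have h : ((B^2-A^2)*(C^2-A^2)*(D^2-A^2)*(C^2-B^2)*(D^2-B^2)*(D^2-C^2)) = ((B-A)*(C-A)*(D-A)*(C-B)*(D-B)*(D-C)) * ((A+B)*((A+C)*((A+D)*((B+C)*((B+D)*(C+D)))))) := by ring
    rw [h]
    exact mul_ne_zero hV hS
  have habcd : A*B*C*D ≠ 0 := mul_ne_zero (mul_ne_zero (mul_ne_zero hA hB) hC) hD
  have hEabcd : ((B^2-A^2)*(C^2-A^2)*(D^2-A^2)*(C^2-B^2)*(D^2-B^2)*(D^2-C^2)) * (A*B*C*D) ≠ 0 := mul_ne_zero hE habcd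
  have l0 : (A^2*(C^2-B^2)*(D^2-B^2)*(D^2-C^2))/((B^2-A^2)*(C^2-A^2)*(D^2-A^2)*(C^2-B^2)*(D^2-B^2)*(D^2-C^2))/A = ((A^2*(C^2-B^2)*(D^2-B^2)*(D^2-C^2))*(B*C*D))/(((B^2-A^2)*(C^2-A^2)*(D^2-A^2)*(C^2-B^2)*(D^2-B^2)*(D^2-C^2))*(A*B*C*D)) := by
    rw [div_div, div_eq_div_iff (mul_ne_zero hE hA) hEabcd]
    ring
  have l1 : (-B^2*(C^2-A^2)*(D^2-A^2)*(D^2-C^2))/((B^2-A^2)*(C^2-A^2)*(D^2-A^2)*(C^2-B^2)*(D^2-B^2)*(D^2-C^2))/B = ((-B^2*(C^2-A^2)*(D^2-A^2)*(D^2-C^2))*(A*C*D))/(((B^2-A^2)*(C^2-A^2)*(D^2-A^2)*(C^2-B^2)*(D^2-B^2)*(D^2-C^2))*(A*B*C*D)) := by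
    rw [div_div, div_eq_div_iff (mul_ne_zero hE hB) hEabcd]
    ring
  have l2 : (C^2*(B^2-A^2)*(D^2-A^2)*(D^2-B^2))/((B^2-A^2)*(C^2-A^2)*(D^2-A^2)*(C^2-B^2)*(D^2-B^2)*(D^2-C^2))/C = ((C^2*(B^2-A^2)*(D^2-A^2)*(D^2-B^2))*(A*B*D))/(((B^2-A^2)*(C^2-A^2)*(D^2-A^2)*(C^2-B^2)*(D^2-B^2)*(D^2-C^2))*(A*B*C*D)) := by
    rw [div_div, div_eq_div_iff (mul_ne_zero hE hC) hEabcd]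
    ring
  have l3 : (-D^2*(B^2-A^2)*(C^2-A^2)*(C^2-B^2))/((B^2-A^2)*(C^2-A^2)*(D^2-A^2)*(C^2-B^2)*(D^2-B^2)*(D^2-C^2))/D = ((-D^2*(B^2-A^2)*(C^2-A^2)*(C^2-B^2))*(A*B*C))/(((B^2-A^2)*(C^2-A^2)*(D^2-A^2)*(C^2-B^2)*(D^2-B^2)*(D^2-C^2))*(A*B*C*D)) := by
    rw [div_div, div_eq_div_iff (mul_ne_zero hE hD) hEabcd]
    ring
  rw [l0, l1, l2, l3, ← add_div, ← add_div, ← add_div,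
    div_eq_div_iff hEabcd hS]
  ring

set_option maxHeartbeats 1000000 in
theorem rational_beta_integral_four (a : Fin 4 → ℂ)
    (him : ∀ ℓ, (a ℓ).im < 0)
    (hdist : ∀ ℓ k, ℓ ≠ k → a ℓ ≠ a k)
    (hsum : ∀ ℓ k, ℓ ≠ k → a ℓ + a k ≠ 0) :
    (1 / ((Real.pi : ℂ) * Complex.I)) *
      ∫ x : ℝ, ((x : ℂ) ^ 2 / ∏ ℓ, ((a ℓ) ^ 2 - (x : ℂ) ^ 2)) =
    -(∑ ℓ, a ℓ) /
      ∏ p ∈ Finset.univ.filter (fun p : Fin 4 × Fin 4 => p.1 < p.2), (a p.1 + a p.2) := by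
  have hne : ∀ ℓ, a ℓ ≠ 0 := by
    intro ℓ h
    have := him ℓ
    rw [h] at this
    simp at this
  have hsq : ∀ ℓ k, ℓ ≠ k → a k ^ 2 - a ℓ ^ 2 ≠ 0 := by
    intro ℓ k h
    have h1 : a k - a ℓ ≠ 0 := sub_ne_zero.2 (hdist k ℓ (Ne.symm h))
    have h2 : a k + a ℓ ≠ 0 := hsum k ℓ (Ne.symm h)
    have he : a k ^ 2 - a ℓ ^ 2 = (a k - a ℓ) * (a k + a ℓ) := by ring
    rw [he]
    exact mul_ne_zero h1 h2
  have hE0 : (a 1^2-a 0^2)*(a 2^2-a 0^2)*(a 3^2-a 0^2)*(a 2^2-a 1^2)*(a 3^2-a 1^2)*(a 3^2-a 2^2) ≠ 0 :=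
    mul_ne_zero (mul_ne_zero (mul_ne_zero (mul_ne_zero (mul_ne_zero
      (hsq 0 1 (by decide)) (hsq 0 2 (by decide))) (hsq 0 3 (by decide)))
      (hsq 1 2 (by decide))) (hsq 1 3 (by decide))) (hsq 2 3 (by decide))
  simp only [Fin.prod_univ_four]
  rw [MeasureTheory.integral_congr_ae (Filter.Eventually.of_forall
    (fun x : ℝ => rbi_pf (a 0) (a 1) (a 2) (a 3) ((x : ℝ) : ℂ)
      (rbi_a_ne _ (him 0) x) (rbi_a_ne _ (him 1) x)
      (rbi_a_ne _ (him 2) x) (rbi_a_ne _ (him 3) x) hE0))]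
  have i0 := (rbi_integrable' (a 0) (him 0)).const_mul ((a 0^2*(a 2^2-a 1^2)*(a 3^2-a 1^2)*(a 3^2-a 2^2))/((a 1^2-a 0^2)*(a 2^2-a 0^2)*(a 3^2-a 0^2)*(a 2^2-a 1^2)*(a 3^2-a 1^2)*(a 3^2-a 2^2)))
  have i1 := (rbi_integrable' (a 1) (him 1)).const_mul ((-a 1^2*(a 2^2-a 0^2)*(a 3^2-a 0^2)*(a 3^2-a 2^2))/((a 1^2-a 0^2)*(a 2^2-a 0^2)*(a 3^2-a 0^2)*(a 2^2-a 1^2)*(a 3^2-a 1^2)*(a 3^2-a 2^2)))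
  have i2 := (rbi_integrable' (a 2) (him 2)).const_mul ((a 2^2*(a 1^2-a 0^2)*(a 3^2-a 0^2)*(a 3^2-a 1^2))/((a 1^2-a 0^2)*(a 2^2-a 0^2)*(a 3^2-a 0^2)*(a 2^2-a 1^2)*(a 3^2-a 1^2)*(a 3^2-a 2^2)))
  have i3 := (rbi_integrable' (a 3) (him 3)).const_mul ((-a 3^2*(a 1^2-a 0^2)*(a 2^2-a 0^2)*(a 2^2-a 1^2))/((a 1^2-a 0^2)*(a 2^2-a 0^2)*(a 3^2-a 0^2)*(a 2^2-a 1^2)*(a 3^2-a 1^2)*(a 3^2-a 2^2)))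
  have hs1 : (∫ x : ℝ, ((a 0^2*(a 2^2-a 1^2)*(a 3^2-a 1^2)*(a 3^2-a 2^2))/((a 1^2-a 0^2)*(a 2^2-a 0^2)*(a 3^2-a 0^2)*(a 2^2-a 1^2)*(a 3^2-a 1^2)*(a 3^2-a 2^2)) * (a 0^2 - ((x:ℝ):ℂ)^2)⁻¹ + (-a 1^2*(a 2^2-a 0^2)*(a 3^2-a 0^2)*(a 3^2-a 2^2))/((a 1^2-a 0^2)*(a 2^2-a 0^2)*(a 3^2-a 0^2)*(a 2^2-a 1^2)*(a 3^2-a 1^2)*(a 3^2-a 2^2)) * (a 1^2 - ((x:ℝ):ℂ)^2)⁻¹ + (a 2^2*(a 1^2-a 0^2)*(a 3^2-a 0^2)*(a 3^2-a 1^2))/((a 1^2-a 0^2)*(a 2^2-a 0^2)*(a 3^2-a 0^2)*(a 2^2-a 1^2)*(a 3^2-a 1^2)*(a 3^2-a 2^2)) * (a 2^2 - ((x:ℝ):ℂ)^2)⁻¹ + (-a 3^2*(a 1^2-a 0^2)*(a 2^2-a 0^2)*(a 2^2-a 1^2))/((a 1^2-a 0^2)*(a 2^2-a 0^2)*(a 3^2-a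 0^2)*(a 2^2-a 1^2)*(a 3^2-a 1^2)*(a 3^2-a 2^2)) * (a 3^2 - ((x:ℝ):ℂ)^2)⁻¹))
      = (∫ x : ℝ, ((a 0^2*(a 2^2-a 1^2)*(a 3^2-a 1^2)*(a 3^2-a 2^2))/((a 1^2-a 0^2)*(a 2^2-a 0^2)*(a 3^2-a 0^2)*(a 2^2-a 1^2)*(a 3^2-a 1^2)*(a 3^2-a 2^2)) * (a 0^2 - ((x:ℝ):ℂ)^2)⁻¹ + (-a 1^2*(a 2^2-a 0^2)*(a 3^2-a 0^2)*(a 3^2-a 2^2))/((a 1^2-a 0^2)*(a 2^2-a 0^2)*(a 3^2-a 0^2)*(a 2^2-a 1^2)*(a 3^2-a 1^2)*(a 3^2-a 2^2)) * (a 1^2 - ((x:ℝ):ℂ)^2)⁻¹ + (a 2^2*(a 1^2-a 0^2)*(a 3^2-a 0^2)*(a 3^2-a 1^2))/((a 1^2-a 0^2)*(a 2^2-a 0^2)*(a 3^2-a 0^2)*(a 2^2-a 1^2)*(a 3^2-a 1^2)*(a 3^2-a 2^2)) * (a 2^2 - ((x:ℝ):ℂ)^2)⁻¹)) + ∫ x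 : ℝ, (-a 3^2*(a 1^2-a 0^2)*(a 2^2-a 0^2)*(a 2^2-a 1^2))/((a 1^2-a 0^2)*(a 2^2-a 0^2)*(a 3^2-a 0^2)*(a 2^2-a 1^2)*(a 3^2-a 1^2)*(a 3^2-a 2^2)) * (a 3^2 - ((x:ℝ):ℂ)^2)⁻¹ :=
    MeasureTheory.integral_add ((i0.add i1).add i2) i3
  have hs2 : (∫ x : ℝ, ((a 0^2*(a 2^2-a 1^2)*(a 3^2-a 1^2)*(a 3^2-a 2^2))/((a 1^2-a 0^2)*(a 2^2-a 0^2)*(a 3^2-a 0^2)*(a 2^2-a 1^2)*(a 3^2-a 1^2)*(a 3^2-a 2^2)) * (a 0^2 - ((x:ℝ):ℂ)^2)⁻¹ + (-a 1^2*(a 2^2-a 0^2)*(a 3^2-a 0^2)*(a 3^2-a 2^2))/((a 1^2-a 0^2)*(a 2^2-a 0^2)*(a 3^2-a 0^2)*(a 2^2-a 1^2)*(a 3^2-a 1^2)*(a 3^2-a 2^2)) * (a 1^2 - ((x:ℝ):ℂ)^2)⁻¹ + (a 2^2*(a 1^2-a 0^2)*(a 3^2-a 0^2)*(a 3^2-a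 1^2))/((a 1^2-a 0^2)*(a 2^2-a 0^2)*(a 3^2-a 0^2)*(a 2^2-a 1^2)*(a 3^2-a 1^2)*(a 3^2-a 2^2)) * (a 2^2 - ((x:ℝ):ℂ)^2)⁻¹))
      = (∫ x : ℝ, ((a 0^2*(a 2^2-a 1^2)*(a 3^2-a 1^2)*(a 3^2-a 2^2))/((a 1^2-a 0^2)*(a 2^2-a 0^2)*(a 3^2-a 0^2)*(a 2^2-a 1^2)*(a 3^2-a 1^2)*(a 3^2-a 2^2)) * (a 0^2 - ((x:ℝ):ℂ)^2)⁻¹ + (-a 1^2*(a 2^2-a 0^2)*(a 3^2-a 0^2)*(a 3^2-a 2^2))/((a 1^2-a 0^2)*(a 2^2-a 0^2)*(a 3^2-a 0^2)*(a 2^2-a 1^2)*(a 3^2-a 1^2)*(a 3^2-a 2^2)) * (a 1^2 - ((x:ℝ):ℂ)^2)⁻¹)) + ∫ x : ℝ, (a 2^2*(a 1^2-a 0^2)*(a 3^2-a 0^2)*(a 3^2-a 1^2))/((a 1^2-a 0^2)*(a 2^2-a 0^2)*(a 3^2-a 0^2)*(a 2^2-a 1^2)*(a 3^2-a 1^2)*(a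 3^2-a 2^2)) * (a 2^2 - ((x:ℝ):ℂ)^2)⁻¹ :=
    MeasureTheory.integral_add (i0.add i1) i2
  have hs3 : (∫ x : ℝ, ((a 0^2*(a 2^2-a 1^2)*(a 3^2-a 1^2)*(a 3^2-a 2^2))/((a 1^2-a 0^2)*(a 2^2-a 0^2)*(a 3^2-a 0^2)*(a 2^2-a 1^2)*(a 3^2-a 1^2)*(a 3^2-a 2^2)) * (a 0^2 - ((x:ℝ):ℂ)^2)⁻¹ + (-a 1^2*(a 2^2-a 0^2)*(a 3^2-a 0^2)*(a 3^2-a 2^2))/((a 1^2-a 0^2)*(a 2^2-a 0^2)*(a 3^2-a 0^2)*(a 2^2-a 1^2)*(a 3^2-a 1^2)*(a 3^2-a 2^2)) * (a 1^2 - ((x:ℝ):ℂ)^2)⁻¹))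
      = (∫ x : ℝ, (a 0^2*(a 2^2-a 1^2)*(a 3^2-a 1^2)*(a 3^2-a 2^2))/((a 1^2-a 0^2)*(a 2^2-a 0^2)*(a 3^2-a 0^2)*(a 2^2-a 1^2)*(a 3^2-a 1^2)*(a 3^2-a 2^2)) * (a 0^2 - ((x:ℝ):ℂ)^2)⁻¹) + ∫ x : ℝ, (-a 1^2*(a 2^2-a 0^2)*(a 3^2-a 0^2)*(a 3^2-a 2^2))/((a 1^2-a 0^2)*(a 2^2-a 0^2)*(a 3^2-a 0^2)*(a 2^2-a 1^2)*(a 3^2-a 1^2)*(a 3^2-a 2^2)) * (a 1^2 - ((x:ℝ):ℂ)^2)⁻¹ :=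
    MeasureTheory.integral_add i0 i1
  rw [hs1, hs2, hs3,
    MeasureTheory.integral_const_mul, MeasureTheory.integral_const_mul,
    MeasureTheory.integral_const_mul, MeasureTheory.integral_const_mul,
    rbi_integral' (a 0) (him 0), rbi_integral' (a 1) (him 1),
    rbi_integral' (a 2) (him 2), rbi_integral' (a 3) (him 3)]
  have hπI : (Real.pi : ℂ) * I ≠ 0 :=
    mul_ne_zero (Complex.ofReal_ne_zero.2 Real.pi_ne_zero) Complex.I_ne_zero
  rw [rbi_step ((Real.pi : ℂ) * I) _ _ _ _ (a 0) (a 1) (a 2) (a 3) hπI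
    (hne 0) (hne 1) (hne 2) (hne 3)]
  have hprod : ∏ p ∈ Finset.univ.filter (fun p : Fin 4 × Fin 4 => p.1 < p.2), (a p.1 + a p.2)
      = (a 0+a 1)*((a 0+a 2)*((a 0+a 3)*((a 1+a 2)*((a 1+a 3)*(a 2+a 3))))) := by
    rw [show Finset.univ.filter (fun p : Fin 4 × Fin 4 => p.1 < p.2) =
      ({((0:Fin 4),(1:Fin 4)), (0,2), (0,3), (1,2), (1,3), (2,3)} : Finset (Fin 4 × Fin 4)) from by decide]
    simp [Finset.prod_insert, Finset.mem_insert]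
    try ring
  rw [hprod, Fin.sum_univ_four]
  exact rbi_alg (a 0) (a 1) (a 2) (a 3) (hne 0) (hne 1) (hne 2) (hne 3)
    (sub_ne_zero.2 (hdist 1 0 (by decide))) (sub_ne_zero.2 (hdist 2 0 (by decide)))
    (sub_ne_zero.2 (hdist 3 0 (by decide))) (sub_ne_zero.2 (hdist 2 1 (by decide)))
    (sub_ne_zero.2 (hdist 3 1 (by decide))) (sub_ne_zero.2 (hdist 3 2 (by decide)))
    (hsum 0 1 (by decide)) (hsum 0 2 (by decide)) (hsum 0 3 (by decide))
    (hsum 1 2 (by decide)) (hsum 1 3 (by decide)) (hsum 2 3 (by decide))
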